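/- There exists a constant M₀ > 0 such that for every ξ₀ ∈ S^⊥ and every ξ ∈ ℝⁿ, |⟨ξ₀, ξ⟩|² ≤ M₀² |ξ₀|² Σ_{j=0}^{k_{ξ₀}} |√Q (Bᵀ)^j ξ|², where k_{ξ₀} is the index of ξ₀. -/

import Mathlib

open Matrix MeasureTheory

/-- The canonical Euclidean norm on `ℝⁿ`. -/
noncomputable def euclNorm {n : ℕ} (v : Fin n → ℝ) : ℝ := Real.sqrt (∑ i, v i ^ 2)

/-- The canonical Euclidean scalar product on `ℝⁿ`. -/
def euclInner {n : ℕ} (u v : Fin n → ℝ) : ℝ := ∑ i, u i * v i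

/-- Membership in `S = ⋂_{j=0}^{n-1} Ker(√Q (Bᵀ)^j)`, where `sq` stands for `√Q`. -/
def memS (n : ℕ) (B sq : Matrix (Fin n) (Fin n) ℝ) (η : Fin n → ℝ) : Prop :=
  ∀ j < n, (sq * Bᵀ ^ j).mulVec η = 0

/-- Membership in `S^⊥`, the Euclidean orthogonal complement of `S`. -/
def memSperp (n : ℕ) (B sq : Matrix (Fin n) (Fin n) ℝ) (ξ₀ : Fin n → ℝ) : Prop :=
  ∀ η : Fin n → ℝ, memS n B sq η → euclInner ξ₀ η = 0

/-- Membership in `V_k^⊥`, where `V_k = ⋂_{j=0}^{k} Ker(√Q (Bᵀ)^j)`. -/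
def memVperp (n : ℕ) (B sq : Matrix (Fin n) (Fin n) ℝ) (k : ℕ) (ξ₀ : Fin n → ℝ) : Prop :=
  ∀ η : Fin n → ℝ, (∀ j ≤ k, (sq * Bᵀ ^ j).mulVec η = 0) → euclInner ξ₀ η = 0

/-- The index `k_{ξ₀} = min {0 ≤ k ≤ r : ξ₀ ∈ V_k^⊥}` of a vector `ξ₀ ∈ S^⊥`. -/
noncomputable def kIndex (n : ℕ) (B sq : Matrix (Fin n) (Fin n) ℝ) (r : ℕ)
    (ξ₀ : Fin n → ℝ) : ℕ :=
  sInf {k | k ≤ r ∧ memVperp n B sq k ξ₀}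

/-- `r` is the smallest integer such that `S = ⋂_{j=0}^{r} Ker(√Q (Bᵀ)^j)`. -/
def IsSmallestr (n : ℕ) (B sq : Matrix (Fin n) (Fin n) ℝ) (r : ℕ) : Prop :=
  IsLeast {k | ∀ η : Fin n → ℝ,
    (∀ j ≤ k, (sq * Bᵀ ^ j).mulVec η = 0) ↔ memS n B sq η} r

/-- The positive semidefinite square root (removed from Mathlib; old definition restored). -/
noncomputable def Matrix.PosSemidef.sqrt {n 𝕜 : Type*} [Fintype n] [RCLike 𝕜] [PartialOrder 𝕜] [DecidableEq n]
    {A : Matrix n n 𝕜} (hA : A.PosSemidef) : Matrix n n 𝕜 :=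
  hA.1.eigenvectorUnitary.1 * diagonal ((↑) ∘ (Real.sqrt ·) ∘ hA.1.eigenvalues) *
    (star hA.1.eigenvectorUnitary : Matrix n n 𝕜)

/-- The symbol `a_t(ξ) = (1/2) ∫₀¹ |√Q e^{α t Bᵀ} ξ|^{2s} dα`. -/
noncomputable def symb (n : ℕ) (B sq : Matrix (Fin n) (Fin n) ℝ) (s t : ℝ)
    (ξ : Fin n → ℝ) : ℝ :=
  (1 / 2) * ∫ α in (0:ℝ)..1, euclNorm ((sq * NormedSpace.exp ((α * t) • Bᵀ)).mulVec ξ) ^ (2 * s)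

open scoped RealInnerProductSpace

lemma enorm_eq {n : ℕ} (v : Fin n → ℝ) :
    euclNorm v = ‖(WithLp.equiv 2 (Fin n → ℝ)).symm v‖ := by
  rw [EuclideanSpace.norm_eq]
  simp [euclNorm, Real.norm_eq_abs, sq_abs]

lemma euclInner_eq {n : ℕ} (u v : EuclideanSpace ℝ (Fin n)) : euclInner u v = ⟪u, v⟫ := by
  simp [euclInner, PiLp.inner_apply, RCLike.inner_apply, mul_comm]

lemma key (n k : ℕ) (A : ℕ → Matrix (Fin n) (Fin n) ℝ) :
    ∃ C : ℝ, 0 < C ∧ ∀ ξ₀ : EuclideanSpace ℝ (Fin n),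
      (∀ η : EuclideanSpace ℝ (Fin n), (∀ j ≤ k, (A j).mulVec η = 0) → ⟪ξ₀, η⟫ = 0) →
      ∀ ξ : EuclideanSpace ℝ (Fin n),
        ⟪ξ₀, ξ⟫ ^ 2 ≤ C * ‖ξ₀‖ ^ 2 * ∑ j ∈ Finset.range (k+1),
          ‖(WithLp.equiv 2 (Fin n → ℝ)).symm ((A j).mulVec ξ)‖ ^ 2 := by
  classical
  let L : ℕ → (EuclideanSpace ℝ (Fin n) →ₗ[ℝ] EuclideanSpace ℝ (Fin n)) :=
    fun j => Matrix.toEuclideanLin (A j)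
  have hL : ∀ j (x : EuclideanSpace ℝ (Fin n)), L j x = 0 ↔ (A j).mulVec x = 0 := fun j x =>
    ⟨fun h => congrArg WithLp.ofLp h, fun h => congrArg (WithLp.toLp 2) h⟩
  let K : Submodule ℝ (EuclideanSpace ℝ (Fin n)) := ⨅ j ∈ Finset.range (k+1), LinearMap.ker (L j)
  have hKmem : ∀ η : EuclideanSpace ℝ (Fin n), η ∈ K ↔ ∀ j ≤ k, (A j).mulVec η = 0 := by
    intro η
    simp only [K, Submodule.mem_iInf, LinearMap.mem_ker, Finset.mem_range, Nat.lt_succ_iff]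
    exact forall₂_congr fun j _ => hL j η
  let f : EuclideanSpace ℝ (Fin n) → ℝ := fun v => ∑ j ∈ Finset.range (k+1), ‖L j v‖ ^ 2
  have hf_cont : Continuous f := by
    apply continuous_finset_sum
    intro j _
    exact ((L j).continuous_of_finiteDimensional.norm).pow 2
  have hf_nonneg : ∀ v, 0 ≤ f v := fun v => Finset.sum_nonneg fun j _ => sq_nonneg _
  have hf_smul : ∀ (c : ℝ) (v : EuclideanSpace ℝ (Fin n)), f (c • v) = c^2 * f v := by
    intro c v
    simp only [f, _root_.map_smul, norm_smul, mul_pow, Finset.mul_sum, Real.norm_eq_abs, sq_abs]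
  have key2 : ∃ lam : ℝ, 0 < lam ∧ ∀ v ∈ Kᗮ, lam * ‖v‖^2 ≤ f v := by
    by_cases hW : Kᗮ = ⊥
    · refine ⟨1, one_pos, fun v hv => ?_⟩
      rw [hW, Submodule.mem_bot] at hv
      simp [hv, hf_nonneg]
    · obtain ⟨v₀, hv₀K, hv₀⟩ := Submodule.ne_bot_iff _ |>.mp hW
      set S : Set (EuclideanSpace ℝ (Fin n)) := Metric.sphere 0 1 ∩ (Kᗮ : Set _) with hS
      have hScompact : IsCompact S :=
        (isCompact_sphere 0 1).inter_right (Submodule.closed_of_finiteDimensional Kᗮ)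
      have hSne : S.Nonempty := by
        refine ⟨‖v₀‖⁻¹ • v₀, ?_, Submodule.smul_mem _ _ hv₀K⟩
        rw [mem_sphere_zero_iff_norm, norm_smul, norm_inv, norm_norm]
        field_simp [norm_ne_zero_iff.mpr hv₀]
      obtain ⟨x, hxS, hxmin⟩ := hScompact.exists_isMinOn hSne hf_cont.continuousOn
      obtain ⟨hxsph, hxW⟩ := hxS
      rw [mem_sphere_zero_iff_norm] at hxsph
      have hlampos : 0 < f x := by
        rcases lt_or_eq_of_le (hf_nonneg x) with h | h
        · exact h
        · exfalso
          have hall : ∀ j ∈ Finset.range (k+1), ‖L j x‖ ^ 2 = 0 := by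
            intro j hj
            have := Finset.sum_eq_zero_iff_of_nonneg (fun j _ => sq_nonneg ‖L j x‖) |>.mp h.symm
            exact this j hj
          have hxK : x ∈ K := by
            rw [hKmem]
            intro j hj
            have := hall j (Finset.mem_range.mpr (Nat.lt_succ_of_le hj))
            have : L j x = 0 := by
              rwa [pow_eq_zero_iff two_ne_zero, norm_eq_zero] at this
            exact (hL j x).mp this
          have : x = 0 := by
            have := Submodule.inner_right_of_mem_orthogonal hxK hxW
            -- x ∈ K and x ∈ Kᗮ
            have h0 : ⟪x, x⟫ = 0 := Submodule.inner_left_of_mem_orthogonal hxK hxW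
            exact inner_self_eq_zero.mp h0
          rw [this, norm_zero] at hxsph
          exact one_ne_zero hxsph.symm
      refine ⟨f x, hlampos, fun v hv => ?_⟩
      rcases eq_or_ne v 0 with rfl | hvne
      · simp [hf_nonneg]
      · have hnv : (0:ℝ) < ‖v‖ := norm_pos_iff.mpr hvne
        have hu : (‖v‖⁻¹ • v) ∈ S := by
          refine ⟨?_, Submodule.smul_mem _ _ hv⟩
          rw [mem_sphere_zero_iff_norm, norm_smul, norm_inv, norm_norm]
          field_simp
        have h3 : f x ≤ f (‖v‖⁻¹ • v) := hxmin hu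
        rw [hf_smul] at h3
        calc f x * ‖v‖^2 ≤ ((‖v‖⁻¹)^2 * f v) * ‖v‖^2 :=
              mul_le_mul_of_nonneg_right h3 (sq_nonneg _)
          _ = f v := by field_simp
  obtain ⟨lam, hlam, hlamle⟩ := key2
  refine ⟨lam⁻¹, inv_pos.mpr hlam, ?_⟩
  intro ξ₀ hξ₀ ξ
  have hξ₀W : ξ₀ ∈ Kᗮ := by
    rw [Submodule.mem_orthogonal']
    intro u hu
    exact hξ₀ u ((hKmem u).mp hu)
  set p : EuclideanSpace ℝ (Fin n) := (K.orthogonalProjectionOnto ξ : EuclideanSpace ℝ (Fin n)) with hp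
  have hpK : p ∈ K := SetLike.coe_mem _
  have hwW : ξ - p ∈ Kᗮ := K.sub_starProjection_mem_orthogonal ξ
  have h1 : ⟪ξ₀, ξ⟫ = ⟪ξ₀, ξ - p⟫ := by
    rw [inner_sub_right]
    have : ⟪ξ₀, p⟫ = 0 := (Submodule.mem_orthogonal' K ξ₀).mp hξ₀W p hpK
    rw [this]; ring
  have h2 : f ξ = f (ξ - p) := by
    apply Finset.sum_congr rfl
    intro j hj
    have : L j p = 0 := by
      have := (hKmem p).mp hpK j (Nat.lt_succ_iff.mp (Finset.mem_range.mp hj))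
      exact (hL j p).mpr this
    rw [map_sub, this, sub_zero]
  have hCS : ⟪ξ₀, ξ - p⟫ ^ 2 ≤ ‖ξ₀‖^2 * ‖ξ - p‖^2 := by
    rw [← mul_pow, ← sq_abs (⟪ξ₀, ξ - p⟫)]
    exact pow_le_pow_left₀ (abs_nonneg _) (abs_real_inner_le_norm _ _) 2
  have hwbound : ‖ξ - p‖^2 ≤ lam⁻¹ * f (ξ - p) := by
    have h := hlamle _ hwW
    rw [← le_div_iff₀' hlam] at h
    rwa [div_eq_inv_mul] at h
  have hfinal : ∑ j ∈ Finset.range (k+1), ‖(WithLp.equiv 2 (Fin n → ℝ)).symm ((A j).mulVec ξ)‖ ^ 2 = f ξ :=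
    Finset.sum_congr rfl fun j _ => rfl
  calc ⟪ξ₀, ξ⟫ ^ 2 = ⟪ξ₀, ξ - p⟫ ^ 2 := by rw [h1]
    _ ≤ ‖ξ₀‖^2 * ‖ξ - p‖^2 := hCS
    _ ≤ ‖ξ₀‖^2 * (lam⁻¹ * f (ξ - p)) := by
        apply mul_le_mul_of_nonneg_left hwbound (sq_nonneg _)
    _ = lam⁻¹ * ‖ξ₀‖^2 * f ξ := by rw [h2]; ring
    _ = lam⁻¹ * ‖ξ₀‖^2 * ∑ j ∈ Finset.range (k+1), ‖(WithLp.equiv 2 (Fin n → ℝ)).symm ((A j).mulVec ξ)‖ ^ 2 := by rw [hfinal]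

theorem statement9' (n : ℕ) (hn : 1 ≤ n)
    (B Q : Matrix (Fin n) (Fin n) ℝ) (hQ : Q.PosSemidef)
    (r : ℕ)
    (hr : IsLeast {k | ∀ η : Fin n → ℝ,
      (∀ j ≤ k, (hQ.sqrt * Bᵀ ^ j).mulVec η = 0) ↔ ∀ j < n, (hQ.sqrt * Bᵀ ^ j).mulVec η = 0} r)
    (kI : (Fin n → ℝ) → ℕ)
    (hkI : ∀ ξ₀, kI ξ₀ = sInf {k | k ≤ r ∧ ∀ η : Fin n → ℝ,
      (∀ j ≤ k, (hQ.sqrt * Bᵀ ^ j).mulVec η = 0) → euclInner ξ₀ η = 0}) :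
    ∃ M₀ : ℝ, 0 < M₀ ∧
      ∀ ξ₀ : Fin n → ℝ,
        (∀ η : Fin n → ℝ, (∀ j < n, (hQ.sqrt * Bᵀ ^ j).mulVec η = 0) → euclInner ξ₀ η = 0) →
        ∀ ξ : Fin n → ℝ,
        euclInner ξ₀ ξ ^ 2 ≤ M₀ ^ 2 * euclNorm ξ₀ ^ 2 *
          ∑ j ∈ Finset.range (kI ξ₀ + 1),
            euclNorm ((hQ.sqrt * Bᵀ ^ j).mulVec ξ) ^ 2 := by
  classical
  choose C hCpos hC using fun k => key n k (fun j => hQ.sqrt * Bᵀ ^ j)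
  set M := ∑ k ∈ Finset.range (r+1), C k with hMdef
  have hM : 0 < M :=
    Finset.sum_pos (fun k _ => hCpos k) ⟨0, Finset.mem_range.mpr (Nat.succ_pos r)⟩
  refine ⟨Real.sqrt M, Real.sqrt_pos.mpr hM, ?_⟩
  intro ξ₀ hξ₀ ξ
  have hMsq : Real.sqrt M ^ 2 = M := Real.sq_sqrt hM.le
  have hmem : kI ξ₀ ∈ {k | k ≤ r ∧ ∀ η : Fin n → ℝ,
      (∀ j ≤ k, (hQ.sqrt * Bᵀ ^ j).mulVec η = 0) → euclInner ξ₀ η = 0} := by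
    rw [hkI]
    exact Nat.sInf_mem ⟨r, le_refl r, fun η hη => hξ₀ η ((hr.1 η).mp hη)⟩
  obtain ⟨hk₀r, hk₀V⟩ := hmem
  set e : (Fin n → ℝ) → EuclideanSpace ℝ (Fin n) := fun v => (WithLp.equiv 2 (Fin n → ℝ)).symm v with he
  have h := hC (kI ξ₀) (e ξ₀)
    (fun η hη => by rw [← euclInner_eq]; exact hk₀V η hη) (e ξ)
  have hCkM : C (kI ξ₀) ≤ M :=
    Finset.single_le_sum (fun i _ => (hCpos i).le)
      (Finset.mem_range.mpr (Nat.lt_succ_of_le hk₀r))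
  have g1 : euclInner ξ₀ ξ = ⟪e ξ₀, e ξ⟫ := euclInner_eq (e ξ₀) (e ξ)
  have g2 : euclNorm ξ₀ = ‖e ξ₀‖ := enorm_eq ξ₀
  have g3 : ∑ j ∈ Finset.range (kI ξ₀ + 1),
        ‖(WithLp.equiv 2 (Fin n → ℝ)).symm ((hQ.sqrt * Bᵀ ^ j).mulVec (e ξ))‖ ^ 2
      = ∑ j ∈ Finset.range (kI ξ₀ + 1), euclNorm ((hQ.sqrt * Bᵀ ^ j).mulVec ξ) ^ 2 :=
    Finset.sum_congr rfl fun j _ => (congrArg (· ^ 2) (enorm_eq _)).symm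
  have hsum_nonneg : 0 ≤ ∑ j ∈ Finset.range (kI ξ₀ + 1),
      ‖(WithLp.equiv 2 (Fin n → ℝ)).symm ((hQ.sqrt * Bᵀ ^ j).mulVec (e ξ))‖ ^ 2 :=
    Finset.sum_nonneg fun j _ => sq_nonneg _
  calc euclInner ξ₀ ξ ^ 2 = ⟪e ξ₀, e ξ⟫ ^ 2 := by rw [g1]
    _ ≤ C (kI ξ₀) * ‖e ξ₀‖ ^ 2 * ∑ j ∈ Finset.range (kI ξ₀ + 1),
          ‖(WithLp.equiv 2 (Fin n → ℝ)).symm ((hQ.sqrt * Bᵀ ^ j).mulVec (e ξ))‖ ^ 2 := h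
    _ ≤ M * ‖e ξ₀‖ ^ 2 * ∑ j ∈ Finset.range (kI ξ₀ + 1),
          ‖(WithLp.equiv 2 (Fin n → ℝ)).symm ((hQ.sqrt * Bᵀ ^ j).mulVec (e ξ))‖ ^ 2 := by
        apply mul_le_mul_of_nonneg_right _ hsum_nonneg
        exact mul_le_mul_of_nonneg_right hCkM (sq_nonneg _)
    _ = Real.sqrt M ^ 2 * euclNorm ξ₀ ^ 2 * ∑ j ∈ Finset.range (kI ξ₀ + 1),
          euclNorm ((hQ.sqrt * Bᵀ ^ j).mulVec ξ) ^ 2 := by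
        rw [hMsq, g2, g3]

/-- There exists `M₀ > 0` such that for every `ξ₀ ∈ S^⊥` and every `ξ ∈ ℝⁿ`,
`|⟨ξ₀, ξ⟩|² ≤ M₀² |ξ₀|² Σ_{j=0}^{k_{ξ₀}} |√Q (Bᵀ)^j ξ|²`. -/
theorem statement9 (n : ℕ) (hn : 1 ≤ n)
    (B Q : Matrix (Fin n) (Fin n) ℝ) (hQ : Q.PosSemidef)
    (r : ℕ) (hr : IsSmallestr n B hQ.sqrt r) :
    ∃ M₀ : ℝ, 0 < M₀ ∧
      ∀ ξ₀ : Fin n → ℝ, memSperp n B hQ.sqrt ξ₀ → ∀ ξ : Fin n → ℝ,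
        euclInner ξ₀ ξ ^ 2 ≤ M₀ ^ 2 * euclNorm ξ₀ ^ 2 *
          ∑ j ∈ Finset.range (kIndex n B hQ.sqrt r ξ₀ + 1),
            euclNorm ((hQ.sqrt * Bᵀ ^ j).mulVec ξ) ^ 2 :=
  statement9' n hn B Q hQ r hr (kIndex n B hQ.sqrt r) (fun _ => rfl)
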